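/- For every k ≥ 3, the pebbling number of the cycle C_k on k vertices is at least 2^{⌊k/2⌋}; consequently, any Class 0 graph on n vertices has girth at most 2·log₂(n) + O(1). -/

import Mathlib

open Finset

/-- A single pebbling move: remove two pebbles from `u` and add one pebble to an
adjacent vertex `v`. -/
def PebblingStep {V : Type*} [DecidableEq V] (G : SimpleGraph V)
    (C C' : V → ℕ) : Prop :=
  ∃ u v : V, G.Adj u v ∧ 2 ≤ C u ∧
    C' = fun x => if x = u then C u - 2 else if x = v then C x + 1 else C x

/-- A configuration `C` is `r`-solvable if some sequence of pebbling moves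
places a pebble on `r`. -/
def Solvable {V : Type*} [DecidableEq V] (G : SimpleGraph V)
    (C : V → ℕ) (r : V) : Prop :=
  ∃ C' : V → ℕ, Relation.ReflTransGen (PebblingStep G) C C' ∧ 1 ≤ C' r

/-- `p` is the pebbling number of `G`: the least `t` such that every
configuration of `t` pebbles is solvable to every root. -/
def IsPebblingNumber {V : Type*} [Fintype V] [DecidableEq V]
    (G : SimpleGraph V) (p : ℕ) : Prop :=
  IsLeast {t : ℕ | ∀ C : V → ℕ, ∑ v, C v = t → ∀ r : V, Solvable G C r} p

section Aux

open SimpleGraph Walk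

variable {V : Type*}

private lemma edge_end_of_path {G : SimpleGraph V} {a u : V} (p : G.Walk a u)
    (hp : p.IsPath) (h : s(u, a) ∈ p.edges) : p.length = 1 := by
  cases p with
  | nil => simp at h
  | @cons _ y _ hxy q =>
    rw [Walk.edges_cons, List.mem_cons] at h
    rw [Walk.cons_isPath_iff] at hp
    rcases h with h | h
    · rcases Sym2.eq_iff.mp h with ⟨h1, h2⟩ | ⟨h1, h2⟩
      · exact absurd (h2 ▸ hxy) (G.irrefl)
      · subst h1
        have hq := Walk.isPath_iff_eq_nil.mp hp.1
        subst hq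
        simp
    · exact absurd (Walk.snd_mem_support_of_mem_edges q h) hp.2

private lemma edges_of_length_one {G : SimpleGraph V} {a b : V} :
    ∀ {p : G.Walk a b}, p.length = 1 → p.edges = [s(a, b)] := by
  intro p
  cases p with
  | nil => intro hl; simp at hl
  | cons h' q =>
    intro hl
    have h0 : q.length = 0 := by simp only [Walk.length_cons] at hl; omega
    have hcb := Walk.eq_of_length_eq_zero h0
    subst hcb
    have hq : q.edges = [] := by
      have := Walk.length_edges q
      rw [h0] at this
      exact List.length_eq_zero_iff.mp this
    simp [Walk.edges_cons, hq]

private lemma exists_cycle_of_odd_count [DecidableEq V] {G : SimpleGraph V} :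
    ∀ (n : ℕ) {u : V} (w : G.Walk u u), w.length ≤ n →
      ∀ e : Sym2 V, Odd (w.edges.count e) →
      ∃ (x : V) (c : G.Walk x x), c.IsCycle ∧ c.length ≤ w.length := by
  intro n
  induction n with
  | zero =>
    intro u w hw e he
    have h0 : w.edges.length = 0 := by rw [Walk.length_edges]; omega
    rw [List.length_eq_zero_iff] at h0
    rw [h0] at he
    simp [Nat.odd_iff] at he
  | succ n ih =>
    intro u w hw e he
    have hepos : 0 < w.edges.count e := by rcases he with ⟨m, hm⟩; omega
    by_cases hnd : w.support.tail.Nodup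
    · -- nodup tail : w is a cycle (or a degenerate 2-walk)
      cases w with
      | nil => simp at hepos
      | @cons u b _ hub q =>
        have hq : q.IsPath := by
          rw [Walk.isPath_def]
          simpa using hnd
        by_cases hmem : s(u, b) ∈ q.edges
        · -- then q has length 1 and w has length 2: every count is even
          exfalso
          have h1 : q.length = 1 := edge_end_of_path q hq hmem
          have hedges : q.edges = [s(b, u)] := edges_of_length_one h1
          rw [Walk.edges_cons, hedges] at he
          have hsw : s(b, u) = s(u, b) := Sym2.eq_swap
          rw [hsw] at he
          rcases he with ⟨m, hm⟩
          by_cases h : e = s(u, b) <;> simp [h, List.count_cons] at hm <;> omega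
        · exact ⟨u, Walk.cons hub q, (Walk.cons_isCycle_iff q hub).mpr ⟨hq, hmem⟩, le_refl _⟩
    · -- there is a duplicated internal vertex: rotate there and split
      obtain ⟨x, hx⟩ := List.exists_duplicate_iff_not_nodup.mpr hnd
      have hxmem : x ∈ w.support.tail := hx.mem
      rw [List.duplicate_iff_two_le_count] at hx
      have hxs : x ∈ w.support := List.mem_of_mem_tail hxmem
      obtain ⟨rot, hlenrot, hcount, hsupcount⟩ :
          ∃ rot : G.Walk x x, rot.length = w.length ∧
            rot.edges.count e = w.edges.count e ∧
            2 ≤ List.count x rot.support.tail := by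
        refine ⟨w.rotate x hxs, ?_, (Walk.rotate_edges w x hxs).perm.count_eq e, ?_⟩
        · rw [Walk.rotate]
          have := congr_arg Walk.length (w.take_spec hxs)
          rw [Walk.length_append] at this ⊢
          omega
        · rw [(Walk.support_rotate w x hxs).perm.count_eq]
          exact hx
      cases rot with
      | nil => simp at hsupcount
      | @cons x b _ hxb rest =>
        have hxrest : x ∈ rest.support := rest.end_mem_support
        set q2 := rest.takeUntil x hxrest with hq2
        set r2 := rest.dropUntil x hxrest with hr2
        have hspec : q2.append r2 = rest := rest.take_spec hxrest
        have hq2c : q2.support.count x = 1 := rest.count_support_takeUntil_eq_one hxrest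
        have hrestlen : rest.length = q2.length + r2.length := by
          have := congr_arg Walk.length hspec
          rw [Walk.length_append] at this
          omega
        have hr2pos : 1 ≤ r2.length := by
          have hsupp : rest.support = q2.support ++ r2.support.tail := by
            rw [← hspec, Walk.support_append]
          have h1 : List.count x rest.support = 1 + List.count x r2.support.tail := by
            rw [hsupp, List.count_append, hq2c]
          have h2 : List.count x r2.support.tail ≤ r2.support.tail.length :=
            List.count_le_length
          have h3 : r2.support.tail.length = r2.length := by
            have := Walk.length_support r2
            have := Walk.support_ne_nil r2
            cases hsup : r2.support with
            | nil => exact absurd hsup (Walk.support_ne_nil r2)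
            | cons hh tt =>
              have := Walk.length_support r2
              rw [hsup] at this
              simp at this ⊢
              omega
          have h4 : List.count x rest.support ≥ 2 := by
            have : (Walk.cons hxb rest).support.tail = rest.support := by
              simp [Walk.support_cons]
            rw [this] at hsupcount
            exact hsupcount
          omega
        have hwl : w.length = 1 + q2.length + r2.length := by
          rw [← hlenrot]
          simp [Walk.length_cons]
          omega
        have hcsplit : w.edges.count e =
            (Walk.cons hxb q2).edges.count e + r2.edges.count e := by
          rw [← hcount]
          rw [show (Walk.cons hxb rest).edges = s(x, b) :: rest.edges from rfl]
          rw [← hspec, Walk.edges_append, Walk.edges_cons, List.count_cons,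
            List.count_cons, List.count_append]
          omega
        rw [Nat.odd_iff] at he
        rw [hcsplit] at he
        have : Odd ((Walk.cons hxb q2).edges.count e) ∨ Odd (r2.edges.count e) := by
          rw [Nat.odd_iff, Nat.odd_iff]
          omega
        rcases this with hodd | hodd
        · obtain ⟨y, c, hc, hle⟩ := ih (Walk.cons hxb q2) (by simp [Walk.length_cons]; omega) e hodd
          exact ⟨y, c, hc, by simp [Walk.length_cons] at hle; omega⟩
        · obtain ⟨y, c, hc, hle⟩ := ih r2 (by omega) e hodd
          exact ⟨y, c, hc, by omega⟩

private lemma walk_split_at {G : SimpleGraph V} {a b : V} (w : G.Walk a b) :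
    ∀ n : ℕ, n ≤ w.length →
      ∃ (x : V) (w₁ : G.Walk a x) (w₂ : G.Walk x b), w₁.append w₂ = w ∧ w₁.length = n := by
  induction w with
  | nil =>
    intro n hn
    simp only [Walk.length_nil, Nat.le_zero] at hn
    subst hn
    exact ⟨_, Walk.nil, Walk.nil, rfl, rfl⟩
  | cons h q ih =>
    intro n hn
    cases n with
    | zero => exact ⟨_, Walk.nil, Walk.cons h q, rfl, rfl⟩
    | succ m =>
      obtain ⟨x, w₁, w₂, hsp, hlen⟩ := ih m (by simp [Walk.length_cons] at hn; omega)
      exact ⟨x, Walk.cons h w₁, w₂, by rw [Walk.cons_append, hsp], by simp [hlen]⟩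

private lemma min_le_dist_of_min_cycle [DecidableEq V] {G : SimpleGraph V} {r x : V}
    (hconn : G.Connected) (w₁ : G.Walk r x) (w₂ : G.Walk x r)
    (hc : (w₁.append w₂).IsCycle)
    (hmin : ∀ (y : V) (c : G.Walk y y), c.IsCycle → (w₁.append w₂).length ≤ c.length) :
    min w₁.length w₂.length ≤ G.dist r x := by
  by_contra hlt
  push_neg at hlt
  obtain ⟨p, hp⟩ := hconn.exists_walk_length_eq_dist r x
  have ht1 : p.length < w₁.length := by omega
  have ht2 : p.length < w₂.length := by omega
  have hw2nodup : w₂.edges.Nodup := by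
    have h := hc.edges_nodup
    rw [Walk.edges_append] at h
    exact h.of_append_right
  have hodd : ∃ e ∈ w₂.edges, Odd ((w₂.append p).edges.count e) := by
    by_contra hall
    push_neg at hall
    have hsub : ∀ e ∈ w₂.edges, e ∈ p.edges := by
      intro e hee
      have h1 : w₂.edges.count e = 1 := List.count_eq_one_of_mem hw2nodup hee
      have h2 : (w₂.append p).edges.count e = w₂.edges.count e + p.edges.count e := by
        rw [Walk.edges_append, List.count_append]
      have h3 := hall e hee
      rw [Nat.odd_iff] at h3
      have h4 : 0 < p.edges.count e := by omega
      exact List.count_pos_iff.mp h4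
    have hlen2 : w₂.length ≤ p.length := by
      have h1 : w₂.edges.toFinset.card = w₂.edges.length :=
        List.toFinset_card_of_nodup hw2nodup
      have h2 : w₂.edges.toFinset ⊆ p.edges.toFinset := by
        intro e he'
        rw [List.mem_toFinset] at he' ⊢
        exact hsub e he'
      have h3 := Finset.card_le_card h2
      have h4 : p.edges.toFinset.card ≤ p.edges.length := p.edges.toFinset_card_le
      rw [Walk.length_edges] at h1 h4
      omega
    omega
  obtain ⟨e, hee, he⟩ := hodd
  obtain ⟨y, c, hcyc, hclen⟩ :=
    exists_cycle_of_odd_count (w₂.append p).length (w₂.append p) le_rfl e he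
  have hge := hmin y c hcyc
  rw [Walk.length_append] at hge hclen
  omega

private lemma phi_step [Fintype V] [DecidableEq V] {G : SimpleGraph V}
    (hconn : G.Connected) (r : V) (d : ℕ) {A B : V → ℕ}
    (hstep : PebblingStep G A B) :
    ∑ x, B x * 2 ^ (d - G.dist r x) ≤ ∑ x, A x * 2 ^ (d - G.dist r x) := by
  obtain ⟨u, w, hadj, h2, rfl⟩ := hstep
  beta_reduce
  have huw : u ≠ w := hadj.ne
  have hdistw : G.dist r u ≤ G.dist r w + 1 := by
    have h1 := hconn.dist_triangle (u := r) (v := w) (w := u)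
    have h2' : G.dist w u = 1 := SimpleGraph.dist_eq_one_iff_adj.mpr hadj.symm
    omega
  have hwt : 2 ^ (d - G.dist r w) ≤ 2 * 2 ^ (d - G.dist r u) := by
    have hle : d - G.dist r w ≤ (d - G.dist r u) + 1 := by omega
    calc 2 ^ (d - G.dist r w) ≤ 2 ^ ((d - G.dist r u) + 1) :=
          Nat.pow_le_pow_right (by norm_num) hle
      _ = 2 * 2 ^ (d - G.dist r u) := by ring
  have hpt : ∀ x : V,
      (if x = u then A u - 2 else if x = w then A x + 1 else A x) * 2 ^ (d - G.dist r x)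
        + (if x = u then 2 * 2 ^ (d - G.dist r u) else 0)
      ≤ A x * 2 ^ (d - G.dist r x) + (if x = w then 2 ^ (d - G.dist r w) else 0) := by
    intro x
    by_cases hxu : x = u
    · subst hxu
      rw [if_pos rfl, if_pos rfl, if_neg huw]
      have hcancel : (A x - 2) * 2 ^ (d - G.dist r x) + 2 * 2 ^ (d - G.dist r x)
          = A x * 2 ^ (d - G.dist r x) := by
        rw [← add_mul, Nat.sub_add_cancel h2]
      omega
    · by_cases hxw : x = w
      · subst hxw
        rw [if_neg hxu, if_pos rfl, if_neg hxu, if_pos rfl]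
        have : (A x + 1) * 2 ^ (d - G.dist r x)
            = A x * 2 ^ (d - G.dist r x) + 2 ^ (d - G.dist r x) := by ring
        omega
      · simp [hxu, hxw]
  have hsum := Finset.sum_le_sum (fun x (_ : x ∈ Finset.univ) => hpt x)
  rw [Finset.sum_add_distrib, Finset.sum_add_distrib, Finset.sum_ite_eq' Finset.univ u,
    Finset.sum_ite_eq' Finset.univ w] at hsum
  simp only [Finset.mem_univ, if_pos] at hsum
  omega

private lemma unsolvable_config [Fintype V] [DecidableEq V] {G : SimpleGraph V}
    (hconn : G.Connected) (r v : V) :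
    ¬ Solvable G (fun x => if x = v then 2 ^ (G.dist r v) - 1 else 0) r := by
  set d := G.dist r v with hd
  rintro ⟨C', hrt, hC'⟩
  have hmono : ∀ {A B : V → ℕ}, Relation.ReflTransGen (PebblingStep G) A B →
      ∑ x, B x * 2 ^ (d - G.dist r x) ≤ ∑ x, A x * 2 ^ (d - G.dist r x) := by
    intro A B h
    induction h with
    | refl => exact le_rfl
    | tail _ h2 ih => exact le_trans (phi_step hconn r d h2) ih
  have key := hmono hrt
  have hinit : ∑ x, (if x = v then 2 ^ d - 1 else 0) * 2 ^ (d - G.dist r x) = 2 ^ d - 1 := by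
    rw [Finset.sum_eq_single v]
    · rw [if_pos rfl, ← hd, Nat.sub_self, pow_zero, mul_one]
    · intro b _ hb; simp [hb]
    · intro h; exact absurd (Finset.mem_univ v) h
  have hlow : C' r * 2 ^ (d - G.dist r r) ≤ ∑ x, C' x * 2 ^ (d - G.dist r x) :=
    Finset.single_le_sum (f := fun x => C' x * 2 ^ (d - G.dist r x))
      (fun i _ => Nat.zero_le _) (Finset.mem_univ r)
  rw [SimpleGraph.dist_self, Nat.sub_zero] at hlow
  have hpow : 1 ≤ 2 ^ d := Nat.one_le_two_pow
  have hmul : 2 ^ d ≤ C' r * 2 ^ d := Nat.le_mul_of_pos_left _ (by omega)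
  rw [hinit] at key
  omega

private lemma solvable_mono [DecidableEq V] {G : SimpleGraph V} {C D : V → ℕ}
    (hle : ∀ x, C x ≤ D x) {r : V} (h : Solvable G C r) : Solvable G D r := by
  obtain ⟨C', hrt, hC'⟩ := h
  have key : ∀ {A B : V → ℕ}, Relation.ReflTransGen (PebblingStep G) A B →
      ∀ D₀ : V → ℕ, (∀ x, A x ≤ D₀ x) →
      ∃ D' : V → ℕ, Relation.ReflTransGen (PebblingStep G) D₀ D' ∧ ∀ x, B x ≤ D' x := by
    intro A B h
    induction h with
    | refl => exact fun D₀ hD => ⟨D₀, Relation.ReflTransGen.refl, hD⟩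
    | @tail b c _ hbc ih =>
      intro D₀ hD
      obtain ⟨D₁, hD₁rt, hD₁⟩ := ih D₀ hD
      obtain ⟨u, w, hadj, h2, rfl⟩ := hbc
      refine ⟨fun x => if x = u then D₁ u - 2 else if x = w then D₁ x + 1 else D₁ x,
        Relation.ReflTransGen.tail hD₁rt ⟨u, w, hadj, le_trans h2 (hD₁ u), rfl⟩, ?_⟩
      intro x
      beta_reduce
      have h1 := hD₁ x
      have h2 := hD₁ u
      split_ifs <;> omega
  obtain ⟨D', hrt', hD'⟩ := key hrt D hle
  exact ⟨D', hrt', le_trans hC' (hD' r)⟩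

private lemma pow_dist_le_pebbling [Fintype V] [DecidableEq V] {G : SimpleGraph V}
    (hconn : G.Connected) {p : ℕ} (hp : IsPebblingNumber G p) (r v : V) :
    2 ^ (G.dist r v) ≤ p := by
  by_contra hlt
  push_neg at hlt
  have hmem := hp.1
  have hsum : ∑ x : V, (if x = v then p else 0) = p := by
    rw [Finset.sum_ite_eq' Finset.univ v]
    simp
  have hsolv := hmem (fun x => if x = v then p else 0) hsum r
  have hbad := solvable_mono (D := fun x => if x = v then 2 ^ (G.dist r v) - 1 else 0)
    (fun x => by by_cases hx : x = v <;> simp [hx] <;> omega) hsolv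
  exact unsolvable_config hconn r v hbad

private lemma walk_f_le {G : SimpleGraph V} (f : V → ℕ)
    (hf : ∀ a b : V, G.Adj a b → f b ≤ f a + 1) {u v : V} (w : G.Walk u v) :
    f v ≤ f u + w.length := by
  induction w with
  | nil => simp
  | cons h q ih =>
    have := hf _ _ h
    rw [SimpleGraph.Walk.length_cons]
    omega

private lemma cycle_adj_val {m : ℕ} {a b : Fin (m + 3)}
    (h : (SimpleGraph.cycleGraph (m + 3)).Adj a b) :
    b.val = (a.val + 1) % (m + 3) ∨ a.val = (b.val + 1) % (m + 3) := by
  rw [SimpleGraph.cycleGraph_adj] at h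
  rcases h with h | h
  · -- a - b = 1, i.e. a = b + 1
    right
    have ha : a = b + 1 := by
      have := sub_eq_iff_eq_add.mp h
      rw [this]; exact add_comm _ _
    rw [ha, Fin.add_def]
    simp [Fin.val_one]
  · left
    have hb : b = a + 1 := by
      have := sub_eq_iff_eq_add.mp h
      rw [this]; exact add_comm _ _
    rw [hb, Fin.add_def]
    simp [Fin.val_one]

private lemma cycle_dist_le {m : ℕ} : ∀ (j : ℕ) (hj : j < m + 3),
    (SimpleGraph.cycleGraph (m + 3)).dist 0 ⟨j, hj⟩ ≤ j := by
  intro j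
  induction j with
  | zero =>
    intro hj
    have : (⟨0, hj⟩ : Fin (m + 3)) = 0 := rfl
    rw [this, SimpleGraph.dist_self]
  | succ i ih =>
    intro hj
    have hi : i < m + 3 := by omega
    have hadj : (SimpleGraph.cycleGraph (m + 3)).Adj ⟨i, hi⟩ ⟨i + 1, hj⟩ := by
      rw [SimpleGraph.cycleGraph_adj]
      right
      apply Fin.ext
      rw [Fin.sub_def]
      simp only [Fin.val_one]
      have h1 : m + 3 - i + (i + 1) = (m + 3) + 1 := by omega
      rw [h1, Nat.add_mod_left, Nat.mod_eq_of_lt (by omega)]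
    have htri : (SimpleGraph.cycleGraph (m + 3)).dist 0 ⟨i + 1, hj⟩ ≤
        (SimpleGraph.cycleGraph (m + 3)).dist 0 ⟨i, hi⟩ +
        (SimpleGraph.cycleGraph (m + 3)).dist ⟨i, hi⟩ ⟨i + 1, hj⟩ :=
      (SimpleGraph.cycleGraph_connected (n := m + 2)).dist_triangle
        (u := (0 : Fin (m + 3))) (v := ⟨i, hi⟩) (w := ⟨i + 1, hj⟩)
    have hone : (SimpleGraph.cycleGraph (m + 3)).dist ⟨i, hi⟩ ⟨i + 1, hj⟩ = 1 :=
      SimpleGraph.dist_eq_one_iff_adj.mpr hadj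
    have := ih hi
    omega

private lemma cycle_dist_eq {k : ℕ} (hk : 3 ≤ k) (hlt : k / 2 < k) :
    (SimpleGraph.cycleGraph k).dist ⟨0, by omega⟩ ⟨k / 2, hlt⟩ = k / 2 := by
  obtain ⟨m, rfl⟩ : ∃ m, k = m + 3 := ⟨k - 3, by omega⟩
  have h00 : (⟨0, by omega⟩ : Fin (m + 3)) = 0 := rfl
  rw [h00]
  refine le_antisymm (cycle_dist_le _ _) ?_
  -- lower bound via the weight function
  have hconn : (SimpleGraph.cycleGraph (m + 3)).Connected :=
    SimpleGraph.cycleGraph_connected (n := m + 2)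
  obtain ⟨p, hp⟩ := hconn.exists_walk_length_eq_dist (0 : Fin (m + 3)) ⟨(m + 3) / 2, hlt⟩
  have hf := walk_f_le (G := SimpleGraph.cycleGraph (m + 3))
    (fun x => min x.val (m + 3 - x.val)) ?_ p
  · have hf' : min ((m + 3) / 2) (m + 3 - (m + 3) / 2) ≤
        min (0 % (m + 3)) (m + 3 - 0 % (m + 3)) + p.length := hf
    rw [hp] at hf'
    have h0 : 0 % (m + 3) = 0 := Nat.zero_mod _
    rw [h0] at hf'
    omega
  · intro a b hadj
    have hb := b.isLt
    have ha := a.isLt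
    rcases cycle_adj_val hadj with h | h
    · rcases Nat.lt_or_ge (a.val + 1) (m + 3) with hc | hc
      · rw [Nat.mod_eq_of_lt hc] at h
        omega
      · have : a.val + 1 = m + 3 := by omega
        rw [this, Nat.mod_self] at h
        omega
    · rcases Nat.lt_or_ge (b.val + 1) (m + 3) with hc | hc
      · rw [Nat.mod_eq_of_lt hc] at h
        omega
      · have : b.val + 1 = m + 3 := by omega
        rw [this, Nat.mod_self] at h
        omega

end Aux

theorem cycle_pebbling_and_class0_girth :
    (∀ k : ℕ, 3 ≤ k →
      (∀ r v : Fin k, (SimpleGraph.cycleGraph k).dist r v = k / 2 →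
        ¬ Solvable (SimpleGraph.cycleGraph k)
          (fun x => if x = v then 2 ^ (k / 2) - 1 else 0) r) ∧
      (∀ p : ℕ, IsPebblingNumber (SimpleGraph.cycleGraph k) p →
        2 ^ (k / 2) ≤ p)) ∧
    (∃ K : ℕ, ∀ (V : Type) (_ : Fintype V) (_ : DecidableEq V)
      (G : SimpleGraph V), G.Connected →
      IsPebblingNumber G (Fintype.card V) → G.egirth ≠ ⊤ →
      G.girth ≤ 2 * Nat.log 2 (Fintype.card V) + K) := by
  constructor
  · intro k hk
    have hconn : (SimpleGraph.cycleGraph k).Connected := by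
      obtain ⟨m, rfl⟩ : ∃ m, k = m + 1 := ⟨k - 1, by omega⟩
      exact SimpleGraph.cycleGraph_connected
    constructor
    · intro r v hdist
      have h := unsolvable_config hconn r v
      rw [hdist] at h
      exact h
    · intro p hp
      have hlt : k / 2 < k := by omega
      have hdist := cycle_dist_eq hk hlt
      have h := pow_dist_le_pebbling hconn hp ⟨0, by omega⟩ ⟨k / 2, hlt⟩
      rw [hdist] at h
      exact h
  · refine ⟨1, ?_⟩
    intro V _ _ G hconn hpeb hg
    have hac : ¬ G.IsAcyclic := fun h => hg (SimpleGraph.egirth_eq_top.mpr h)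
    obtain ⟨a, c, hcyc, hlen⟩ := SimpleGraph.exists_girth_eq_length.mpr hac
    have hmin : ∀ (y : V) (c' : G.Walk y y), c'.IsCycle → c.length ≤ c'.length := by
      intro y c' hc'
      have h1 : G.egirth ≤ (c'.length : ℕ∞) := SimpleGraph.le_egirth.mp le_rfl y c' hc'
      have h2 : G.girth ≤ c'.length := by
        have h3 := ENat.toNat_le_toNat h1 (by simp : (c'.length : ℕ∞) ≠ ⊤)
        simpa [SimpleGraph.girth] using h3
      omega
    obtain ⟨x, w₁, w₂, happ, hl1⟩ := walk_split_at c (c.length / 2) (Nat.div_le_self _ _)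
    have hcyc' : (w₁.append w₂).IsCycle := by rw [happ]; exact hcyc
    have hmin' : ∀ (y : V) (c' : G.Walk y y), c'.IsCycle →
        (w₁.append w₂).length ≤ c'.length := by
      intro y c' hc'
      rw [happ]
      exact hmin y c' hc'
    have hd := min_le_dist_of_min_cycle hconn w₁ w₂ hcyc' hmin'
    have hsum : w₁.length + w₂.length = c.length := by
      rw [← SimpleGraph.Walk.length_append, happ]
    have hdge : c.length / 2 ≤ G.dist a x := by omega
    have hpow := pow_dist_le_pebbling hconn hpeb a x
    have h2g : 2 ^ (c.length / 2) ≤ Fintype.card V :=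
      le_trans (Nat.pow_le_pow_right (by norm_num) hdge) hpow
    have hcard : Fintype.card V ≠ 0 := by
      have := Nat.one_le_two_pow (n := c.length / 2)
      omega
    have hlog := (Nat.le_log_iff_pow_le (by norm_num) hcard).mpr h2g
    rw [hlen]
    omega
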